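/- Let S be the semigroup presented by generators a, b, c, d and the single defining relation ab = cd, i.e. the quotient of the free semigroup on {a,b,c,d} by the smallest congruence identifying the words ab and cd. Then H²(S,A) = 0 for every S-module A. -/

import Mathlib

structure SgModule (S : Type) [Semigroup S] where
  carrier : Type
  [grp : AddCommGroup carrier]
  smul : S → carrier → carrier
  smul_add : ∀ s a b, smul s (a + b) = smul s a + smul s b
  mul_smul : ∀ s t a, smul (s * t) a = smul s (smul t a)

attribute [instance] SgModule.grp

/-- `altSign k a = (-1)^k • a`. -/
def altSign {A : Type} [AddCommGroup A] (k : ℕ) (a : A) : A :=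
  if Even k then a else -a

lemma altSign_add {A : Type} [AddCommGroup A] (k : ℕ) (a b : A) :
    altSign k (a + b) = altSign k a + altSign k b := by
  unfold altSign; split <;> [rfl; exact neg_add a b]

def mulContract {S : Type} [Mul S] {n : ℕ} (x : Fin (n + 1) → S) (i : Fin n) :
    Fin n → S := fun j =>
  if (j : ℕ) < (i : ℕ) then x j.castSucc
  else if (j : ℕ) = (i : ℕ) then x j.castSucc * x j.succ
  else x j.succ

lemma altSign_one' {A : Type} [AddCommGroup A] (a : A) : altSign 1 a = -a :=
  if_neg (by decide)

lemma altSign_two' {A : Type} [AddCommGroup A] (a : A) : altSign 2 a = a :=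
  if_pos (by decide)

lemma altSign_three' {A : Type} [AddCommGroup A] (a : A) : altSign 3 a = -a :=
  if_neg (by decide)

namespace SgModule

variable {S : Type} [Semigroup S] (M : SgModule S)

abbrev cochain (n : ℕ) : Type := (Fin n → S) → M.carrier

def cobFun {n : ℕ} (f : M.cochain n) : M.cochain (n + 1) := fun x =>
  M.smul (x 0) (f (Fin.tail x))
    + (∑ i : Fin n, altSign ((i : ℕ) + 1) (f (mulContract x i)))
    + altSign (n + 1) (f (Fin.init x))

lemma cobFun_add {n : ℕ} (f g : M.cochain n) :
    M.cobFun (f + g) = M.cobFun f + M.cobFun g := by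
  funext x
  show M.cobFun (f + g) x = M.cobFun f x + M.cobFun g x
  unfold cobFun
  simp only [Pi.add_apply, altSign_add, M.smul_add]
  rw [Finset.sum_add_distrib]
  abel

def cob (n : ℕ) : M.cochain n →+ M.cochain (n + 1) :=
  AddMonoidHom.mk' M.cobFun M.cobFun_add

def cocycles (n : ℕ) : AddSubgroup (M.cochain n) := (M.cob n).ker

def cobounds : (n : ℕ) → AddSubgroup (M.cochain n)
  | 0 => ⊥
  | n + 1 => (M.cob n).range

def cohomology (n : ℕ) : Type :=
  M.cocycles n ⧸ (M.cobounds n).addSubgroupOf (M.cocycles n)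

noncomputable instance (n : ℕ) : AddCommGroup (M.cohomology n) := by
  unfold cohomology; infer_instance

end SgModule

noncomputable def cohDim (S : Type) [Semigroup S] : ℕ∞ :=
  sSup {e : ℕ∞ | ∃ n : ℕ, e = (n : ℕ∞) ∧ ∃ M : SgModule S, Nontrivial (M.cohomology n)}

def IsFreeSemigroup (T : Type) [Semigroup T] : Prop :=
  ∃ X : Type, Nonempty (T ≃* FreeSemigroup X)


/-- The semigroup `S = ⟨a, b, c, d ∣ ab = cd⟩`: the quotient of the free
semigroup on four generators by the congruence generated by `ab = cd`. -/
def relAbCd : Con (FreeSemigroup (Fin 4)) :=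
  conGen (fun p q => p = FreeSemigroup.of 0 * FreeSemigroup.of 1 ∧
    q = FreeSemigroup.of 2 * FreeSemigroup.of 3)

section Aux

open FreeSemigroup

namespace SgModule

variable {S : Type} [Semigroup S] (M : SgModule S)

/-- `M.smul s` as an additive monoid hom. -/
def smulHom (s : S) : M.carrier →+ M.carrier :=
  AddMonoidHom.mk' (M.smul s) (M.smul_add s)

lemma smul_zero' (s : S) : M.smul s (0 : M.carrier) = 0 :=
  (M.smulHom s).map_zero

lemma smul_sub' (s : S) (a b : M.carrier) :
    M.smul s (a - b) = M.smul s a - M.smul s b :=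
  (M.smulHom s).map_sub a b

/-- The coboundary of a 1-cochain is a 2-cocycle (in explicit form). -/
lemma cobound_is_cocycle (h : S → M.carrier) (x y z : S) :
    M.smul x (M.smul y (h z) - h (y * z) + h y)
      - (M.smul (x * y) (h z) - h (x * y * z) + h (x * y))
      + (M.smul x (h (y * z)) - h (x * (y * z)) + h x)
      - (M.smul x (h y) - h (x * y) + h x) = 0 := by
  rw [M.mul_smul, mul_assoc, M.smul_add, M.smul_sub']
  abel

lemma cobFun_one_apply (g : M.cochain 1) (x y : S) :
    M.cobFun g ![x, y] = M.smul x (g ![y]) - g ![x * y] + g ![x] := by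
  have h1 : Fin.tail ![x, y] = ![y] := by
    funext i; fin_cases i; rfl
  have h2 : mulContract ![x, y] 0 = ![x * y] := by
    funext i; fin_cases i; simp [mulContract]
  have h3 : Fin.init ![x, y] = ![x] := by
    funext i; fin_cases i; rfl
  unfold cobFun
  rw [Fin.sum_univ_one, h1, h2, h3]
  norm_num [altSign_one', altSign_two']
  abel

lemma cobFun_two_apply (f : M.cochain 2) (x y z : S) :
    M.cobFun f ![x, y, z]
      = M.smul x (f ![y, z]) - f ![x * y, z] + f ![x, y * z] - f ![x, y] := by
  have h1 : Fin.tail ![x, y, z] = ![y, z] := by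
    funext i; fin_cases i <;> rfl
  have h2 : mulContract ![x, y, z] 0 = ![x * y, z] := by
    funext i; fin_cases i <;> simp [mulContract]
  have h3 : mulContract ![x, y, z] 1 = ![x, y * z] := by
    funext i; fin_cases i <;> simp [mulContract]
  have h4 : Fin.init ![x, y, z] = ![x, y] := by
    funext i; fin_cases i <;> rfl
  unfold cobFun
  rw [Fin.sum_univ_two, h1, h2, h3, h4]
  norm_num [altSign_one', altSign_two', altSign_three']
  abel

/-- Multiplication on the extension `A × S` built from a 2-cocycle. -/
def extMul (F : S → S → M.carrier) :
    M.carrier × S → M.carrier × S → M.carrier × S :=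
  fun p q => (p.1 + M.smul p.2 q.1 - F p.2 q.2, p.2 * q.2)

lemma extMul_assoc (F : S → S → M.carrier)
    (hF : ∀ x y z, M.smul x (F y z) - F (x * y) z + F x (y * z) - F x y = 0)
    (p q r : M.carrier × S) :
    M.extMul F (M.extMul F p q) r = M.extMul F p (M.extMul F q r) := by
  obtain ⟨a, s⟩ := p; obtain ⟨b, t⟩ := q; obtain ⟨c, u⟩ := r
  unfold extMul
  refine Prod.ext ?_ (mul_assoc s t u)
  show a + M.smul s b - F s t + M.smul (s * t) c - F (s * t) u
      = a + M.smul s (b + M.smul t c - F t u) - F s (t * u)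
  refine sub_eq_zero.mp ?_
  rw [← hF s t u, M.mul_smul, M.smul_sub', M.smul_add]
  abel

end SgModule

/-- Invariance of weight homomorphisms under the relation `ab = cd`. -/
lemma relAbCd_weight (w : Fin 4 → ℕ) (hw : w 0 + w 1 = w 2 + w 3)
    {u v : FreeSemigroup (Fin 4)}
    (h : (u : relAbCd.Quotient) = (v : relAbCd.Quotient)) :
    FreeSemigroup.lift (fun i => Multiplicative.ofAdd (w i)) u
      = FreeSemigroup.lift (fun i => Multiplicative.ofAdd (w i)) v := by
  set φ := FreeSemigroup.lift (fun i => Multiplicative.ofAdd (w i)) with hφ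
  have hle : relAbCd ≤ Con.ker φ := by
    refine Con.conGen_le.mpr ?_
    rintro x y ⟨rfl, rfl⟩
    show φ _ = φ _
    rw [map_mul, map_mul, hφ]
    simp only [FreeSemigroup.lift_of]
    rw [← ofAdd_add, ← ofAdd_add, hw]
  exact hle ((Con.eq relAbCd).mp h)

lemma gen1_ne_gen0 :
    ((FreeSemigroup.of 1 : FreeSemigroup (Fin 4)) : relAbCd.Quotient)
      ≠ ((FreeSemigroup.of 0 : FreeSemigroup (Fin 4)) : relAbCd.Quotient) := by
  intro h
  have := relAbCd_weight ![1, 0, 0, 1] rfl h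
  simp only [FreeSemigroup.lift_of] at this
  revert this; decide

lemma gen2_ne_gen0 :
    ((FreeSemigroup.of 2 : FreeSemigroup (Fin 4)) : relAbCd.Quotient)
      ≠ ((FreeSemigroup.of 0 : FreeSemigroup (Fin 4)) : relAbCd.Quotient) := by
  intro h
  have := relAbCd_weight ![1, 0, 0, 1] rfl h
  simp only [FreeSemigroup.lift_of] at this
  revert this; decide

lemma gen3_ne_gen0 :
    ((FreeSemigroup.of 3 : FreeSemigroup (Fin 4)) : relAbCd.Quotient)
      ≠ ((FreeSemigroup.of 0 : FreeSemigroup (Fin 4)) : relAbCd.Quotient) := by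
  intro h
  have := relAbCd_weight ![1, 0, 1, 0] rfl h
  simp only [FreeSemigroup.lift_of] at this
  revert this; decide

lemma rel_ab_cd :
    ((FreeSemigroup.of 0 * FreeSemigroup.of 1 : FreeSemigroup (Fin 4)) : relAbCd.Quotient)
      = ((FreeSemigroup.of 2 * FreeSemigroup.of 3 : FreeSemigroup (Fin 4)) : relAbCd.Quotient) :=
  (Con.eq relAbCd).mpr (ConGen.Rel.of _ _ ⟨rfl, rfl⟩)

/-- Every 2-cocycle `F` with `F a b = F c d` has a primitive. -/
lemma exists_primitive (M : SgModule relAbCd.Quotient)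
    (F : relAbCd.Quotient → relAbCd.Quotient → M.carrier)
    (hF : ∀ x y z, M.smul x (F y z) - F (x * y) z + F x (y * z) - F x y = 0)
    (hab : F ((FreeSemigroup.of 0 : FreeSemigroup (Fin 4)) : relAbCd.Quotient)
              ((FreeSemigroup.of 1 : FreeSemigroup (Fin 4)) : relAbCd.Quotient)
         = F ((FreeSemigroup.of 2 : FreeSemigroup (Fin 4)) : relAbCd.Quotient)
              ((FreeSemigroup.of 3 : FreeSemigroup (Fin 4)) : relAbCd.Quotient)) :
    ∃ g : relAbCd.Quotient → M.carrier,
      ∀ x y, M.smul x (g y) - g (x * y) + g x = F x y := by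
  letI : Mul (M.carrier × relAbCd.Quotient) := ⟨M.extMul F⟩
  letI : Semigroup (M.carrier × relAbCd.Quotient) :=
    { mul_assoc := M.extMul_assoc F hF }
  set φ : FreeSemigroup (Fin 4) →ₙ* (M.carrier × relAbCd.Quotient) :=
    FreeSemigroup.lift (fun i => ((0 : M.carrier), ((FreeSemigroup.of i : FreeSemigroup (Fin 4)) : relAbCd.Quotient))) with hφ
  have hker : ∀ u v, relAbCd u v → φ u = φ v := by
    have hle : relAbCd ≤ Con.ker φ := by
      refine Con.conGen_le.mpr ?_
      rintro x y ⟨rfl, rfl⟩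
      show φ _ = φ _
      rw [map_mul, map_mul, hφ]
      simp only [FreeSemigroup.lift_of]
      show M.extMul F _ _ = M.extMul F _ _
      unfold SgModule.extMul
      simp only
      rw [M.smul_zero', M.smul_zero', hab, ← Con.coe_mul, ← Con.coe_mul, rel_ab_cd]
    exact fun u v h => hle h
  set ψ : relAbCd.Quotient → M.carrier × relAbCd.Quotient :=
    fun s => Con.liftOn s φ hker with hψdef
  have hψ : ∀ u : FreeSemigroup (Fin 4), ψ (u : relAbCd.Quotient) = φ u := fun _ => rfl
  have hψmul : ∀ x y : relAbCd.Quotient, ψ (x * y) = ψ x * ψ y := by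
    intro x y
    refine Con.induction_on₂ x y ?_
    intro u v
    rw [← Con.coe_mul, hψ, hψ, hψ, map_mul]
  have hsnd : ∀ x : relAbCd.Quotient, (ψ x).2 = x := by
    have key : ∀ u : FreeSemigroup (Fin 4), (φ u).2 = (u : relAbCd.Quotient) := by
      have heq : (MulHom.comp ⟨Prod.snd, fun p q => rfl⟩ φ :
            FreeSemigroup (Fin 4) →ₙ* relAbCd.Quotient)
          = ⟨fun u => (u : relAbCd.Quotient), fun u v => Con.coe_mul u v⟩ := by
        refine FreeSemigroup.hom_ext ?_
        funext i
        show (φ (FreeSemigroup.of i)).2 = _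
        rw [hφ, FreeSemigroup.lift_of]
        rfl
      intro u
      exact DFunLike.congr_fun heq u
    intro x
    refine Con.induction_on x ?_
    intro u
    rw [hψ, key]
  refine ⟨fun s => (ψ s).1, ?_⟩
  intro x y
  show M.smul x ((ψ y).1) - (ψ (x * y)).1 + (ψ x).1 = F x y
  have h1 : (ψ (x * y)).1 = (ψ x).1 + M.smul x ((ψ y).1) - F x y := by
    rw [hψmul]
    show (M.extMul F (ψ x) (ψ y)).1 = _
    unfold SgModule.extMul
    rw [hsnd, hsnd]
  rw [h1]
  abel

end Aux


/-- For `S = ⟨a, b, c, d ∣ ab = cd⟩` one has `H²(S, A) = 0`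
for every `S`-module `A`. -/
theorem H2_of_ab_eq_cd_trivial (M : SgModule relAbCd.Quotient) :
    Subsingleton (M.cohomology 2) := by
  classical
  have key : M.cocycles 2 ≤ M.cobounds 2 := by
    intro f hf
    have hf0 : M.cob 2 f = 0 := hf
    have hcoc : ∀ x y z : relAbCd.Quotient,
        M.smul x (f ![y, z]) - f ![x * y, z] + f ![x, y * z] - f ![x, y] = 0 := by
      intro x y z
      rw [← M.cobFun_two_apply f x y z]
      exact congrFun hf0 ![x, y, z]
    set a := ((FreeSemigroup.of 0 : FreeSemigroup (Fin 4)) : relAbCd.Quotient) with ha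
    set b := ((FreeSemigroup.of 1 : FreeSemigroup (Fin 4)) : relAbCd.Quotient) with hb
    set c := ((FreeSemigroup.of 2 : FreeSemigroup (Fin 4)) : relAbCd.Quotient) with hc
    set d := ((FreeSemigroup.of 3 : FreeSemigroup (Fin 4)) : relAbCd.Quotient) with hd
    have hba : b ≠ a := by rw [ha, hb]; exact gen1_ne_gen0
    have hca : c ≠ a := by rw [ha, hc]; exact gen2_ne_gen0
    have hda : d ≠ a := by rw [ha, hd]; exact gen3_ne_gen0
    have habcd : a * b = c * d := by
      rw [ha, hb, hc, hd, ← Con.coe_mul, ← Con.coe_mul]; exact rel_ab_cd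
    set δ := f ![a, b] - f ![c, d] with hδ
    set h : relAbCd.Quotient → M.carrier := fun s => if s = a then δ else 0 with hh
    set F' : relAbCd.Quotient → relAbCd.Quotient → M.carrier :=
      fun x y => f ![x, y] - (M.smul x (h y) - h (x * y) + h x) with hF'def
    have hF' : ∀ x y z, M.smul x (F' y z) - F' (x * y) z + F' x (y * z) - F' x y = 0 := by
      intro x y z
      have h1 := hcoc x y z
      have h2 := M.cobound_is_cocycle h x y z
      have h3 := congrArg₂ (fun p q : M.carrier => p - q) h1 h2
      simp only [sub_zero] at h3
      rw [hF'def]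
      simp only
      rw [M.smul_sub', ← h3]
      abel
    have hFab : F' a b = F' c d := by
      rw [hF'def]
      simp only
      rw [hh]
      simp only
      rw [if_neg hba, if_neg hda, if_neg hca, habcd]
      simp only [if_true, M.smul_zero', hδ]
      abel
    have hFab' : F' ((FreeSemigroup.of 0 : FreeSemigroup (Fin 4)) : relAbCd.Quotient)
          ((FreeSemigroup.of 1 : FreeSemigroup (Fin 4)) : relAbCd.Quotient)
        = F' ((FreeSemigroup.of 2 : FreeSemigroup (Fin 4)) : relAbCd.Quotient)
          ((FreeSemigroup.of 3 : FreeSemigroup (Fin 4)) : relAbCd.Quotient) := by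
      rw [← ha, ← hb, ← hc, ← hd]; exact hFab
    obtain ⟨g, hg⟩ := exists_primitive M F' hF' hFab'
    show f ∈ (M.cob 1).range
    rw [AddMonoidHom.mem_range]
    refine ⟨fun v => g (v 0) + h (v 0), ?_⟩
    funext x
    have hx : x = ![x 0, x 1] := by funext i; fin_cases i <;> rfl
    rw [hx]
    show M.cobFun (fun v => g (v 0) + h (v 0)) ![x 0, x 1] = f ![x 0, x 1]
    rw [M.cobFun_one_apply]
    simp only [Matrix.cons_val_zero]
    have hgx := hg (x 0) (x 1)
    rw [hF'def] at hgx
    simp only at hgx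
    rw [eq_sub_iff_add_eq] at hgx
    rw [← hgx, M.smul_add]
    abel
  have htop : (M.cobounds 2).addSubgroupOf (M.cocycles 2) = ⊤ :=
    AddSubgroup.addSubgroupOf_eq_top.mpr key
  unfold SgModule.cohomology
  rw [htop]
  exact QuotientAddGroup.subsingleton_quotient_top
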